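/- Let t ≥ 3, r ≥ 3, e ≥ 3, k ≥ 2 with r > k and t ≤ e-1. Let F be an r-uniform hypergraph on [n] that is G_r(ir-(i-1)k-1, i)-free for all t ≤ i ≤ e-1, and in which every (k-1)-subset has codegree 0 or at least e. If there exist t-1 distinct edges A_1,...,A_{t-1} ∈ F with |A_1 ∪ ... ∪ A_{t-1}| ≤ (t-1)r-(t-2)k-1, then in fact |A_1 ∪ ... ∪ A_{t-1}| = (t-1)r-(t-2)k-1. -/

import Mathlib

open Finset

/-- `F` is an `r`-uniform hypergraph: every edge has `r` vertices. -/
def UniformH {n : ℕ} (r : ℕ) (F : Finset (Finset (Fin n))) : Prop :=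
  ∀ A ∈ F, A.card = r

/-- `F` is `G_r(v,e)`-free: any `e` distinct edges have union of size at least `v+1`. -/
def IsGFree {n : ℕ} (v e : ℕ) (F : Finset (Finset (Fin n))) : Prop :=
  ∀ S ⊆ F, S.card = e → v + 1 ≤ (S.biUnion id).card

/-- `f_r(n,v,e)`: the maximum number of edges of an `n`-vertex `G_r(v,e)`-free
`r`-uniform hypergraph. -/
noncomputable def extremalF (r n v e : ℕ) : ℕ :=
  sSup {m | ∃ F : Finset (Finset (Fin n)), UniformH r F ∧ IsGFree v e F ∧ F.card = m}

theorem stmt_4 (n r e k t : ℕ) (ht : 3 ≤ t) (hr : 3 ≤ r) (he : 3 ≤ e) (hk : 2 ≤ k)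
    (hrk : k < r) (hte : t ≤ e - 1)
    (F : Finset (Finset (Fin n))) (hF : UniformH r F)
    (hfree : ∀ i, t ≤ i → i ≤ e - 1 → IsGFree (i * r - (i - 1) * k - 1) i F)
    (hdeg : ∀ T : Finset (Fin n), T.card = k - 1 →
      (F.filter (fun A => T ⊆ A)).card = 0 ∨ e ≤ (F.filter (fun A => T ⊆ A)).card)
    (S : Finset (Finset (Fin n))) (hS : S ⊆ F) (hScard : S.card = t - 1)
    (hX : (S.biUnion id).card ≤ (t - 1) * r - (t - 2) * k - 1) :
    (S.biUnion id).card = (t - 1) * r - (t - 2) * k - 1 := by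
  -- pick an edge A ∈ S
  obtain ⟨A, hA⟩ : ∃ A, A ∈ S := by
    apply Finset.card_pos.mp
    omega
  have hAF : A ∈ F := hS hA
  have hAcard : A.card = r := hF A hAF
  -- pick a (k-1)-subset T of A
  obtain ⟨T, hTA, hTcard⟩ : ∃ T ⊆ A, T.card = k - 1 :=
    Finset.exists_subset_card_eq (s := A) (n := k - 1) (by omega)
  -- codegree of T is ≥ e
  have hApos : A ∈ F.filter (fun B => T ⊆ B) := Finset.mem_filter.mpr ⟨hAF, hTA⟩
  have hcod : e ≤ (F.filter (fun B => T ⊆ B)).card := by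
    rcases hdeg T hTcard with h0 | h
    · exact absurd (Finset.card_eq_zero.mp h0) (Finset.ne_empty_of_mem hApos)
    · exact h
  -- find B containing T, not in S
  have hnotsub : ¬ (F.filter (fun B => T ⊆ B) ⊆ S) := by
    intro hsub
    have := Finset.card_le_card hsub
    omega
  obtain ⟨B, hBfil, hBS⟩ := Finset.not_subset.mp hnotsub
  obtain ⟨hBF, hTB⟩ := Finset.mem_filter.mp hBfil
  have hBcard : B.card = r := hF B hBF
  -- apply freeness to insert B S
  set S' := insert B S with hS'
  have hS'sub : S' ⊆ F := by
    intro x hx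
    rcases Finset.mem_insert.mp hx with rfl | hx
    · exact hBF
    · exact hS hx
  have hS'card : S'.card = t := by
    rw [Finset.card_insert_of_notMem hBS, hScard]; omega
  have hlow : t * r - (t - 1) * k - 1 + 1 ≤ (S'.biUnion id).card :=
    hfree t le_rfl hte S' hS'sub hS'card
  -- bound the union of S'
  have hUnion : S'.biUnion id = B ∪ S.biUnion id := by
    rw [hS', Finset.biUnion_insert]; rfl
  have hTsub : T ⊆ S.biUnion id := hTA.trans (Finset.subset_biUnion_of_mem id hA)
  have hsub2 : B ∪ S.biUnion id ⊆ (B \ T) ∪ S.biUnion id := by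
    intro x hx
    rcases Finset.mem_union.mp hx with hx | hx
    · by_cases hxT : x ∈ T
      · exact Finset.mem_union_right _ (hTsub hxT)
      · exact Finset.mem_union_left _ (Finset.mem_sdiff.mpr ⟨hx, hxT⟩)
    · exact Finset.mem_union_right _ hx
  have hBT : (B \ T).card = r - (k - 1) := by
    rw [Finset.card_sdiff_of_subset hTB, hBcard, hTcard]
  have hup : (S'.biUnion id).card ≤ (r - (k - 1)) + (S.biUnion id).card := by
    rw [hUnion]
    calc (B ∪ S.biUnion id).card ≤ ((B \ T) ∪ S.biUnion id).card :=
          Finset.card_le_card hsub2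
      _ ≤ (B \ T).card + (S.biUnion id).card := Finset.card_union_le _ _
      _ = (r - (k - 1)) + (S.biUnion id).card := by rw [hBT]
  -- arithmetic
  obtain ⟨t', rfl⟩ : ∃ t', t = t' + 3 := ⟨t - 3, by omega⟩
  have h1 : (t' + 3) * r = (t' + 2) * r + r := by ring
  have h2 : (t' + 3 - 1) * k = (t' + 1) * k + k := by
    have : t' + 3 - 1 = t' + 2 := by omega
    rw [this]; ring
  have h3 : (t' + 3 - 1) * r = (t' + 2) * r := by
    congr 1
  have h4 : (t' + 3 - 2) * k = (t' + 1) * k := by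
    congr 1
  have h5 : (t' + 1) * k + (t' + 1) ≤ (t' + 2) * r := by
    calc (t' + 1) * k + (t' + 1) = (t' + 1) * (k + 1) := by ring
      _ ≤ (t' + 2) * r := by
          apply Nat.mul_le_mul <;> omega
  rw [h3, h4] at hX ⊢
  rw [h1, h2] at hlow
  omega
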